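/- Let k ≥ 1 and let x : Fin k → ℕ satisfy x i ≥ 1 for every i and x i ≠ x j whenever i ≠ j. Suppose it is not the case that x 0 > x 1 > ⋯ > x (k−1). Then in the multiset U(x) = Σ_{p=1}^{q} f(G_p), either there occurs a diagonal braket (i,i) with i ≠ 0, or there occur two brakets (i,j) and (i,ℓ) with the same bra i such that j ≠ ℓ, j ≠ 0, and ℓ ≠ 0. -/

import Mathlib

/-- The greedy independent set `G_p = {i : x i ≥ p}`. -/
def greedySet (k : ℕ) (x : Fin k → ℕ) (p : ℕ) : Finset (Fin k) :=
  Finset.univ.filter (fun i => p ≤ x i)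

/-- The circle braket multiset of a finite set of colors `g_0 < g_1 < … < g_m`:
`{(g_0,g_1), (g_1,g_2), …, (g_{m−1},g_m), (g_m,g_0)}`. -/
def circleBrakets (k : ℕ) (S : Finset (Fin k)) : Multiset (Fin k × Fin k) :=
  ↑((S.sort (· ≤ ·)).zip ((S.sort (· ≤ ·)).rotate 1))

/-- `U(x) = Σ_{p=1}^{q} f(G_p)`, with `q = max_i x i`. -/
def U (k : ℕ) (x : Fin k → ℕ) : Multiset (Fin k × Fin k) :=
  ∑ p ∈ Finset.Icc 1 (Finset.univ.sup x), circleBrakets k (greedySet k x p)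


lemma mem_circleBrakets_single {k : ℕ} (m : Fin k) : (m, m) ∈ circleBrakets k {m} := by
  simp [circleBrakets, Finset.sort_singleton]

lemma mem_circleBrakets_adj {k : ℕ} (S : Finset (Fin k)) (i j : Fin k)
    (hi : i ∈ S) (hj : j ∈ S) (hij : i < j)
    (hbtw : ∀ t ∈ S, t ≤ i ∨ j ≤ t) :
    (i, j) ∈ circleBrakets k S := by
  set L := S.sort (· ≤ ·) with hL
  have hsorted : L.SortedLT := S.sortedLT_sort
  have hmono : StrictMono L.get := hsorted.strictMono_get
  have hiL : i ∈ L := (Finset.mem_sort _).2 hi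
  have hjL : j ∈ L := (Finset.mem_sort _).2 hj
  obtain ⟨ti, hti⟩ := List.get_of_mem hiL
  obtain ⟨tj, htj⟩ := List.get_of_mem hjL
  have h1 : ti < tj := by
    rw [← hmono.lt_iff_lt, hti, htj]; exact hij
  have h2 : (ti : ℕ) + 1 < L.length := by
    have := tj.isLt
    have := h1
    omega
  have hget : L.get ⟨ti + 1, h2⟩ = j := by
    have hgt : i < L.get ⟨ti + 1, h2⟩ := by
      rw [← hti]; exact hmono (by simp [Fin.lt_def])
    have hle : L.get ⟨ti + 1, h2⟩ ≤ j := by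
      rw [← htj]; exact hmono.le_iff_le.2 (by simp [Fin.le_def]; omega)
    have hmem : L.get ⟨ti + 1, h2⟩ ∈ S := (Finset.mem_sort _).1 (L.get_mem _)
    rcases hbtw _ hmem with h | h
    · exact absurd h (not_le.2 hgt)
    · exact le_antisymm hle h
  have hlen : (L.zip (L.rotate 1)).length = L.length := by
    simp [List.length_zip, List.length_rotate]
  have h3 : (ti : ℕ) < (L.zip (L.rotate 1)).length := by omega
  have hz : (L.zip (L.rotate 1))[(ti : ℕ)] = (i, j) := by
    rw [List.getElem_zip]
    have hrot : (L.rotate 1)[(ti : ℕ)]'(by rw [List.length_rotate]; omega) = j := by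
      rw [List.getElem_rotate]
      have : ((ti : ℕ) + 1) % L.length = (ti : ℕ) + 1 := Nat.mod_eq_of_lt h2
      simp only [this]
      rw [← hget]; rfl
    rw [hrot]
    rw [← hti]; rfl
  have : (i, j) ∈ L.zip (L.rotate 1) := hz ▸ List.getElem_mem h3
  exact this

lemma mem_U {k : ℕ} (x : Fin k → ℕ) (p : ℕ) (hp1 : 1 ≤ p) (hp2 : p ≤ Finset.univ.sup x)
    (b : Fin k × Fin k) (hb : b ∈ circleBrakets k (greedySet k x p)) : b ∈ U k x :=
  Multiset.mem_sum.2 ⟨p, Finset.mem_Icc.2 ⟨hp1, hp2⟩, hb⟩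

/-- If every color is present, all counts are distinct, and the counts are not
strictly decreasing in the color order, then `U(x)` contains a diagonal braket
`(i,i)` with `i ≠ 0`, or two brakets `(i,j)` and `(i,ℓ)` with the same bra and
distinct nonzero kets. -/
theorem stmt14 (k : ℕ) [NeZero k] (x : Fin k → ℕ)
    (hpos : ∀ i : Fin k, 1 ≤ x i)
    (hdist : ∀ i j : Fin k, i ≠ j → x i ≠ x j)
    (hnotsorted : ¬ ∀ i j : Fin k, i < j → x j < x i) :
    (∃ i : Fin k, i ≠ 0 ∧ (i, i) ∈ U k x) ∨
      (∃ i j l : Fin k, j ≠ l ∧ j ≠ 0 ∧ l ≠ 0 ∧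
        (i, j) ∈ U k x ∧ (i, l) ∈ U k x) := by
  by_contra hcon
  push_neg at hcon
  obtain ⟨h1, h2⟩ := hcon
  have hq1 : 1 ≤ Finset.univ.sup x :=
    le_trans (hpos 0) (Finset.le_sup (Finset.mem_univ 0))
  have aux : ∀ n (hn : n < k) (j : Fin k), x ⟨n, hn⟩ ≤ x j ↔ j ≤ ⟨n, hn⟩ := by
    intro n
    induction n with
    | zero =>
      intro hn j
      have h0 : (⟨0, hn⟩ : Fin k) = 0 := rfl
      rw [h0]
      constructor
      · intro hle
        by_contra hj0
        have hj0' : j ≠ 0 := fun h => hj0 (h ▸ le_rfl)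
        obtain ⟨m, -, hmsup⟩ := Finset.exists_mem_eq_sup Finset.univ
          ⟨0, Finset.mem_univ 0⟩ x
        by_cases hm0 : m = 0
        · have hxj : x j ≤ Finset.univ.sup x := Finset.le_sup (Finset.mem_univ j)
          rw [hmsup, hm0] at hxj
          exact hdist j 0 hj0' (le_antisymm hxj hle)
        · apply h1 m hm0
          have hgq : greedySet k x (x m) = {m} := by
            ext t
            simp only [greedySet, Finset.mem_filter, Finset.mem_univ, true_and,
              Finset.mem_singleton]
            constructor
            · intro hle'
              have : x t ≤ x m := hmsup ▸ Finset.le_sup (Finset.mem_univ t)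
              by_contra htm
              exact hdist t m htm (le_antisymm this hle')
            · rintro rfl; exact le_rfl
          have hsing := mem_circleBrakets_single m
          rw [← hgq] at hsing
          exact mem_U x (x m) (hpos m) hmsup.ge _ hsing
      · intro hj
        have : j = 0 := by
          ext
          have := (Fin.le_def).1 hj
          simp only [Fin.val_zero] at this ⊢
          omega
        subst this; exact le_rfl
    | succ n IH =>
      intro hn j
      have hnk : n < k := by omega
      set pn : Fin k := ⟨n, hnk⟩ with hpn
      set i1 : Fin k := ⟨n + 1, hn⟩ with hi1
      have hpi : pn < i1 := Fin.mk_lt_mk.2 (Nat.lt_succ_self n)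
      obtain ⟨a, haI, hamax⟩ := Finset.exists_max_image (Finset.Ioi pn) x
        ⟨i1, Finset.mem_Ioi.2 hpi⟩
      have hpa : pn < a := Finset.mem_Ioi.1 haI
      have hxa_lt : x a < x pn :=
        not_le.1 (fun h => absurd ((IH hnk a).1 h) (not_le.2 hpa))
      have ha_eq : a = i1 := by
        by_contra hane
        have haval : n < (a : ℕ) := by
          have := hpa
          rwa [Fin.lt_def] at this
        have hai : i1 < a := by
          rw [Fin.lt_def]
          have : (a : ℕ) ≠ n + 1 := fun h => hane (Fin.ext h)
          simp only [hi1]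
          omega
        have hg1 : greedySet k x 1 = Finset.univ := by
          ext t; simp [greedySet, hpos t]
        have hb1 : (pn, i1) ∈ circleBrakets k (greedySet k x 1) := by
          rw [hg1]
          apply mem_circleBrakets_adj _ _ _ (Finset.mem_univ _) (Finset.mem_univ _) hpi
          intro t _
          rw [Fin.le_def, Fin.le_def]
          simp only [hpn, hi1]
          omega
        have hb2 : (pn, a) ∈ circleBrakets k (greedySet k x (x a)) := by
          apply mem_circleBrakets_adj
          · simp only [greedySet, Finset.mem_filter, Finset.mem_univ, true_and]
            exact hxa_lt.le
          · simp [greedySet]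
          · exact hpa
          · intro t ht
            simp only [greedySet, Finset.mem_filter, Finset.mem_univ, true_and] at ht
            by_cases htp : t ≤ pn
            · exact Or.inl htp
            · right
              have htI : t ∈ Finset.Ioi pn := Finset.mem_Ioi.2 (not_le.1 htp)
              have : x t ≤ x a := hamax t htI
              have hta : t = a := by
                by_contra hta
                exact hdist t a hta (le_antisymm this ht)
              exact le_of_eq hta.symm
        have hi10 : i1 ≠ 0 := by
          intro h
          have := congrArg Fin.val h
          simp [hi1, Fin.val_zero] at this
        have ha0 : a ≠ 0 := by
          intro h
          rw [h] at haval
          simp [Fin.val_zero] at haval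
        exact h2 pn i1 a (fun h => hane h.symm) hi10 ha0
          (mem_U x 1 le_rfl hq1 _ hb1)
          (mem_U x (x a) (hpos a) (Finset.le_sup (Finset.mem_univ a)) _ hb2)
      constructor
      · intro hle
        by_cases hjp : j ≤ pn
        · exact le_trans hjp hpi.le
        · have hjI : j ∈ Finset.Ioi pn := Finset.mem_Ioi.2 (not_le.1 hjp)
          have : x j ≤ x a := hamax j hjI
          rw [ha_eq] at this
          by_cases hji : j = i1
          · exact le_of_eq hji
          · exact absurd (le_antisymm this hle) (hdist j i1 hji)
      · intro hji
        rcases eq_or_lt_of_le hji with h | h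
        · exact le_of_eq (congrArg x h.symm)
        · have hjpn : j ≤ pn := by
            rw [Fin.le_def]
            rw [Fin.lt_def] at h
            simp only [hpn]
            simp only [hi1] at h
            omega
          have h1' : x pn ≤ x j := (IH hnk j).2 hjpn
          have h2' : x i1 < x pn := by rw [← ha_eq]; exact hxa_lt
          exact le_of_lt (lt_of_lt_of_le h2' h1')
  apply hnotsorted
  intro i j hij
  have := aux i.val i.isLt j
  rw [Fin.eta] at this
  exact not_le.1 (fun h => absurd (this.1 h) (not_le.2 hij))
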